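/- (Scalar MMSE aggregation, Proposition 1.) For all real numbers ν > 0, σ > 0, h, and y, the posterior mean of a zero-mean Gaussian gradient entry given the one-bit channel output equals ( ∫_{-∞}^{∞} g · φ_ν(g) · φ_σ(y − h·sign(g)) dg ) / ( ∫_{-∞}^{∞} φ_ν(g) · φ_σ(y − h·sign(g)) dg ) = ν · √(2/π) · tanh( h·y / σ² ). -/

import Mathlib

open Real MeasureTheory Set

private lemma integral_mul_exp_neg_mul_sq_Ioi {b : ℝ} (hb : 0 < b) :
    ∫ x in Ioi (0 : ℝ), x * Real.exp (-b * x ^ 2) = (2 * b)⁻¹ := by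
  have hc : 0 < (b : ℂ).re := by simpa using hb
  have h1 := integral_mul_cexp_neg_mul_sq hc
  have h2 : ∫ x in Ioi (0 : ℝ), ((x * Real.exp (-b * x ^ 2) : ℝ) : ℂ) =
      ∫ x in Ioi (0 : ℝ), (x : ℂ) * Complex.exp (-(b : ℂ) * (x : ℂ) ^ 2) := by
    congr 1
    ext x
    push_cast [Complex.ofReal_exp]
    ring_nf
  have h3 : ((∫ x in Ioi (0 : ℝ), x * Real.exp (-b * x ^ 2) : ℝ) : ℂ) = (((2 * b)⁻¹ : ℝ) : ℂ) := by
    calc ((∫ x in Ioi (0 : ℝ), x * Real.exp (-b * x ^ 2) : ℝ) : ℂ)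
        = ∫ x in Ioi (0 : ℝ), ((x * Real.exp (-b * x ^ 2) : ℝ) : ℂ) := integral_ofReal.symm
      _ = ∫ x in Ioi (0 : ℝ), (x : ℂ) * Complex.exp (-(b : ℂ) * (x : ℂ) ^ 2) := h2
      _ = (2 * (b:ℂ))⁻¹ := h1
      _ = (((2 * b)⁻¹ : ℝ) : ℂ) := by push_cast; ring
  exact_mod_cast h3

private lemma integral_mul_exp_neg_mul_sq_Iio {b : ℝ} (hb : 0 < b) :
    ∫ x in Iio (0 : ℝ), x * Real.exp (-b * x ^ 2) = -(2 * b)⁻¹ := by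
  have h1 : ∫ x in Ioi (0 : ℝ), (fun t => t * Real.exp (-b * t ^ 2)) (-x) =
      ∫ x in Iic (-(0:ℝ)), (fun t => t * Real.exp (-b * t ^ 2)) x :=
    integral_comp_neg_Ioi 0 (fun t => t * Real.exp (-b * t ^ 2))
  simp only [neg_zero] at h1
  have h2 : (∫ x in Ioi (0 : ℝ), (fun t => t * Real.exp (-b * t ^ 2)) (-x)) =
      -∫ x in Ioi (0 : ℝ), x * Real.exp (-b * x ^ 2) := by
    rw [← integral_neg]
    congr 1; ext x
    simp only [neg_sq]; ring
  have h3 : (∫ x in Iic (0:ℝ), (fun t => t * Real.exp (-b * t ^ 2)) x) =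
      ∫ x in Iio (0:ℝ), x * Real.exp (-b * x ^ 2) := by
    apply setIntegral_congr_set
    exact Iio_ae_eq_Iic.symm
  rw [h2, h3] at h1
  rw [← h1, integral_mul_exp_neg_mul_sq_Ioi hb]

private lemma integral_exp_neg_mul_sq_Iio {b : ℝ} (_hb : 0 < b) :
    ∫ x in Iio (0 : ℝ), Real.exp (-b * x ^ 2) = Real.sqrt (π / b) / 2 := by
  have h1 : ∫ x in Ioi (0 : ℝ), (fun t => Real.exp (-b * t ^ 2)) (-x) =
      ∫ x in Iic (-(0:ℝ)), (fun t => Real.exp (-b * t ^ 2)) x :=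
    integral_comp_neg_Ioi 0 (fun t => Real.exp (-b * t ^ 2))
  simp only [neg_zero, neg_sq] at h1
  have h3 : (∫ x in Iic (0:ℝ), Real.exp (-b * x ^ 2)) =
      ∫ x in Iio (0:ℝ), Real.exp (-b * x ^ 2) := by
    apply setIntegral_congr_set
    exact Iio_ae_eq_Iic.symm
  rw [h3] at h1
  rw [← h1, integral_gaussian_Ioi]

private lemma split_integral (f : ℝ → ℝ) (h1 : IntegrableOn f (Iio 0))
    (h2 : IntegrableOn f (Ioi 0)) :
    ∫ x : ℝ, f x = (∫ x in Iio (0:ℝ), f x) + ∫ x in Ioi (0:ℝ), f x := by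
  rw [← setIntegral_union (by simp [disjoint_left]; intro a ha; linarith)
    measurableSet_Ioi h1 h2, Iio_union_Ioi]
  rw [setIntegral_congr_set (t := univ) (by rw [ae_eq_univ]; simp), setIntegral_univ]

/-- Proposition 1: scalar MMSE aggregation. The posterior mean of a zero-mean Gaussian
gradient entry given the one-bit channel output. -/
theorem stmt_3 (ν σ h y : ℝ) (hν : 0 < ν) (hσ : 0 < σ)
    (φ : ℝ → ℝ → ℝ)
    (hφ : ∀ s x : ℝ, φ s x = (1 / (Real.sqrt (2 * π) * s)) * Real.exp (-x ^ 2 / (2 * s ^ 2))) :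
    (∫ g : ℝ, g * φ ν g * φ σ (y - h * Real.sign g)) /
      (∫ g : ℝ, φ ν g * φ σ (y - h * Real.sign g)) =
    ν * Real.sqrt (2 / π) * Real.tanh (h * y / σ ^ 2) := by
  have hb : (0:ℝ) < (2 * ν ^ 2)⁻¹ := by positivity
  have hφν : ∀ g : ℝ, φ ν g =
      (1 / (Real.sqrt (2 * π) * ν)) * Real.exp (-(2 * ν ^ 2)⁻¹ * g ^ 2) := by
    intro g; rw [hφ]; congr 1; ring
  set K : ℝ := 1 / (Real.sqrt (2 * π) * ν) with hKdef
  have hsπ : 0 < Real.sqrt (2 * π) := Real.sqrt_pos.2 (by positivity)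
  have hK : 0 < K := by rw [hKdef]; positivity
  have hc1 : 0 < φ σ (y - h) := by rw [hφ]; positivity
  have hc2 : 0 < φ σ (y + h) := by rw [hφ]; positivity
  have hinv : (2 * (2 * ν ^ 2)⁻¹)⁻¹ = ν ^ 2 := by
    field_simp
  have hsqrt : Real.sqrt (π / (2 * ν ^ 2)⁻¹) = Real.sqrt (2 * π) * ν := by
    rw [show π / (2 * ν ^ 2)⁻¹ = (2 * π) * ν ^ 2 by field_simp,
      Real.sqrt_mul (by positivity), Real.sqrt_sq hν.le]
  -- numerator pieces
  have hIoiN : (∫ g in Ioi (0:ℝ), g * φ ν g * φ σ (y - h * Real.sign g))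
      = K * φ σ (y - h) * ν ^ 2 := by
    have e : EqOn
        (fun g : ℝ => (K * φ σ (y - h)) * (g * Real.exp (-(2 * ν ^ 2)⁻¹ * g ^ 2)))
        (fun g : ℝ => g * φ ν g * φ σ (y - h * Real.sign g)) (Ioi 0) := by
      intro g hg
      simp only
      rw [Real.sign_of_pos hg, mul_one, hφν g]
      ring
    rw [← setIntegral_congr_fun measurableSet_Ioi e, integral_const_mul _ _,
      integral_mul_exp_neg_mul_sq_Ioi hb, hinv]
  have hIioN : (∫ g in Iio (0:ℝ), g * φ ν g * φ σ (y - h * Real.sign g))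
      = -(K * φ σ (y + h) * ν ^ 2) := by
    have e : EqOn
        (fun g : ℝ => (K * φ σ (y + h)) * (g * Real.exp (-(2 * ν ^ 2)⁻¹ * g ^ 2)))
        (fun g : ℝ => g * φ ν g * φ σ (y - h * Real.sign g)) (Iio 0) := by
      intro g hg
      simp only
      rw [Real.sign_of_neg hg, show y - h * (-1) = y + h by ring, hφν g]
      ring
    rw [← setIntegral_congr_fun measurableSet_Iio e, integral_const_mul _ _,
      integral_mul_exp_neg_mul_sq_Iio hb, hinv]
    ring
  -- denominator pieces
  have hIoiD : (∫ g in Ioi (0:ℝ), φ ν g * φ σ (y - h * Real.sign g))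
      = φ σ (y - h) / 2 := by
    have e : EqOn
        (fun g : ℝ => (K * φ σ (y - h)) * Real.exp (-(2 * ν ^ 2)⁻¹ * g ^ 2))
        (fun g : ℝ => φ ν g * φ σ (y - h * Real.sign g)) (Ioi 0) := by
      intro g hg
      simp only
      rw [Real.sign_of_pos hg, mul_one, hφν g]
      ring
    rw [← setIntegral_congr_fun measurableSet_Ioi e, integral_const_mul _ _,
      integral_gaussian_Ioi, hsqrt, hKdef]
    field_simp
  have hIioD : (∫ g in Iio (0:ℝ), φ ν g * φ σ (y - h * Real.sign g))
      = φ σ (y + h) / 2 := by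
    have e : EqOn
        (fun g : ℝ => (K * φ σ (y + h)) * Real.exp (-(2 * ν ^ 2)⁻¹ * g ^ 2))
        (fun g : ℝ => φ ν g * φ σ (y - h * Real.sign g)) (Iio 0) := by
      intro g hg
      simp only
      rw [Real.sign_of_neg hg, show y - h * (-1) = y + h by ring, hφν g]
      ring
    rw [← setIntegral_congr_fun measurableSet_Iio e, integral_const_mul _ _,
      integral_exp_neg_mul_sq_Iio hb, hsqrt, hKdef]
    field_simp
  -- integrability
  have hintIoiN : IntegrableOn
      (fun g : ℝ => g * φ ν g * φ σ (y - h * Real.sign g)) (Ioi 0) := by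
    have e : EqOn
        (fun g : ℝ => (K * φ σ (y - h)) * (g * Real.exp (-(2 * ν ^ 2)⁻¹ * g ^ 2)))
        (fun g : ℝ => g * φ ν g * φ σ (y - h * Real.sign g)) (Ioi 0) := by
      intro g hg
      simp only
      rw [Real.sign_of_pos hg, mul_one, hφν g]
      ring
    exact (((integrable_mul_exp_neg_mul_sq hb).const_mul _).integrableOn).congr_fun e
      measurableSet_Ioi
  have hintIioN : IntegrableOn
      (fun g : ℝ => g * φ ν g * φ σ (y - h * Real.sign g)) (Iio 0) := by
    have e : EqOn
        (fun g : ℝ => (K * φ σ (y + h)) * (g * Real.exp (-(2 * ν ^ 2)⁻¹ * g ^ 2)))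
        (fun g : ℝ => g * φ ν g * φ σ (y - h * Real.sign g)) (Iio 0) := by
      intro g hg
      simp only
      rw [Real.sign_of_neg hg, show y - h * (-1) = y + h by ring, hφν g]
      ring
    exact (((integrable_mul_exp_neg_mul_sq hb).const_mul _).integrableOn).congr_fun e
      measurableSet_Iio
  have hintIoiD : IntegrableOn
      (fun g : ℝ => φ ν g * φ σ (y - h * Real.sign g)) (Ioi 0) := by
    have e : EqOn
        (fun g : ℝ => (K * φ σ (y - h)) * Real.exp (-(2 * ν ^ 2)⁻¹ * g ^ 2))
        (fun g : ℝ => φ ν g * φ σ (y - h * Real.sign g)) (Ioi 0) := by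
      intro g hg
      simp only
      rw [Real.sign_of_pos hg, mul_one, hφν g]
      ring
    exact (((integrable_exp_neg_mul_sq hb).const_mul _).integrableOn).congr_fun e
      measurableSet_Ioi
  have hintIioD : IntegrableOn
      (fun g : ℝ => φ ν g * φ σ (y - h * Real.sign g)) (Iio 0) := by
    have e : EqOn
        (fun g : ℝ => (K * φ σ (y + h)) * Real.exp (-(2 * ν ^ 2)⁻¹ * g ^ 2))
        (fun g : ℝ => φ ν g * φ σ (y - h * Real.sign g)) (Iio 0) := by
      intro g hg
      simp only
      rw [Real.sign_of_neg hg, show y - h * (-1) = y + h by ring, hφν g]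
      ring
    exact (((integrable_exp_neg_mul_sq hb).const_mul _).integrableOn).congr_fun e
      measurableSet_Iio
  rw [split_integral _ hintIioN hintIoiN, split_integral _ hintIioD hintIoiD,
    hIoiN, hIioN, hIoiD, hIioD]
  -- now pure algebra
  rw [hφ σ (y - h), hφ σ (y + h)]
  set t : ℝ := h * y / σ ^ 2 with htdef
  have hE1 : -(y - h) ^ 2 / (2 * σ ^ 2) = -(y ^ 2 + h ^ 2) / (2 * σ ^ 2) + t := by
    rw [htdef]; field_simp; ring
  have hE2 : -(y + h) ^ 2 / (2 * σ ^ 2) = -(y ^ 2 + h ^ 2) / (2 * σ ^ 2) + -t := by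
    rw [htdef]; field_simp; ring
  rw [hE1, hE2, Real.exp_add, Real.exp_add]
  set M : ℝ := Real.exp (-(y ^ 2 + h ^ 2) / (2 * σ ^ 2)) with hMdef
  have hM : 0 < M := Real.exp_pos _
  have hT : 0 < Real.exp t := Real.exp_pos _
  have hT' : 0 < Real.exp (-t) := Real.exp_pos _
  rw [Real.tanh_eq_sinh_div_cosh, Real.sinh_eq, Real.cosh_eq]
  set S : ℝ := Real.sqrt (2 * π) with hSdef
  set Q : ℝ := Real.sqrt (2 / π) with hQdef
  have hQS : Q * S = 2 := by
    rw [hQdef, hSdef, ← Real.sqrt_mul (by positivity),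
      show (2 / π) * (2 * π) = 4 by field_simp; ring,
      show (4:ℝ) = 2 ^ 2 by norm_num, Real.sqrt_sq (by norm_num)]
  set T : ℝ := Real.exp t with hTdef
  set T' : ℝ := Real.exp (-t) with hT'def
  have hS : 0 < S := hsπ
  field_simp
  ring_nf
  have hKQ : K * ν * 2 = Q := by
    rw [hKdef]; field_simp; linarith [hQS]
  linear_combination (T ^ 2 - T' ^ 2) * hKQ
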